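/- Let ξ^{(n)} ∈ stdSimplex ℝ (Fin (n+1)) be an arbitrary sequence of points, n ∈ ℕ. Then there exist positive integers k_n (n ≥ 0) with k_0 = 1, and positive integers m^{(n)}_j (n ≥ 0, 0 ≤ j ≤ n), such that k_{n+1} = Σ_{j=0}^{n} m^{(n)}_j k_j for every n, and such that the points ζ^{(n)} ∈ stdSimplex ℝ (Fin (n+1)) defined by ζ^{(n)}_j = m^{(n)}_j k_j / k_{n+1} satisfy d(ξ^{(n)}, ζ^{(n)}) ≤ 2^{−n} for every n, where d is the Euclidean distance on Fin (n+1) → ℝ. -/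

import Mathlib

open Finset

/-- Multiplicities chosen from previous data `p` and a point `ξn` of the simplex. -/
noncomputable def Mf (n : ℕ) (ξn : Fin (n + 1) → ℝ) (p : Fin (n + 1) → ℕ) : Fin (n + 1) → ℕ :=
  fun j => ⌊((((n + 1) * (∑ i, p i) * 2 ^ n : ℕ) : ℝ) * ξn j) / (p j : ℝ)⌋₊ + 1

/-- All values `k_0, …, k_n` at stage `n`. -/
noncomputable def gf (ξ : ∀ n : ℕ, Fin (n + 1) → ℝ) : (n : ℕ) → Fin (n + 1) → ℕ
  | 0 => fun _ => 1
  | (n + 1) => Fin.snoc (gf ξ n) (∑ j, Mf n (ξ n) (gf ξ n) j * gf ξ n j)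

lemma gf_pos (ξ : ∀ n : ℕ, Fin (n + 1) → ℝ) : ∀ n j, 1 ≤ gf ξ n j := by
  intro n
  induction n with
  | zero => intro j; simp [gf]
  | succ n ih =>
    intro j
    refine Fin.lastCases ?_ ?_ j
    · simp only [gf, Fin.snoc_last]
      have h0 : 1 * 1 ≤ Mf n (ξ n) (gf ξ n) 0 * gf ξ n 0 :=
        Nat.mul_le_mul (Nat.le_add_left 1 _) (ih 0)
      exact le_trans h0 (Finset.single_le_sum
        (f := fun j : Fin (n + 1) => Mf n (ξ n) (gf ξ n) j * gf ξ n j)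
        (fun i _ => Nat.zero_le _) (mem_univ 0))
    · intro i
      simp only [gf, Fin.snoc_castSucc]
      exact ih i

lemma gf_coh (ξ : ∀ n : ℕ, Fin (n + 1) → ℝ) :
    ∀ n (j : Fin (n + 1)), gf ξ n j = gf ξ (j : ℕ) (Fin.last (j : ℕ)) := by
  intro n
  induction n with
  | zero => intro j; fin_cases j; rfl
  | succ n ih =>
    intro j
    refine Fin.lastCases ?_ ?_ j
    · rfl
    · intro i
      have h1 : gf ξ (n + 1) (Fin.castSucc i) = gf ξ n i := by
        simp only [gf, Fin.snoc_castSucc]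
      rw [h1, ih i]
      rfl

lemma key (n : ℕ) (ξn : Fin (n + 1) → ℝ) (h0 : ∀ j, 0 ≤ ξn j) (h1 : ∑ j, ξn j = 1)
    (p : Fin (n + 1) → ℕ) (hp : ∀ j, 1 ≤ p j) :
    Real.sqrt (∑ j : Fin (n + 1), (ξn j - (Mf n ξn p j : ℝ) * (p j : ℝ) /
      ((∑ i, Mf n ξn p i * p i : ℕ) : ℝ)) ^ 2) ≤ (1 / 2 : ℝ) ^ n := by
  set m := Mf n ξn p with hm
  set S : ℕ := ∑ i, p i with hS
  set T : ℕ := (n + 1) * S * 2 ^ n with hT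
  have hSge : (n + 1 : ℕ) ≤ S := by
    calc (n + 1 : ℕ) = ∑ _i : Fin (n + 1), 1 := by simp
    _ ≤ S := Finset.sum_le_sum fun i _ => hp i
  have hS1 : (1 : ℕ) ≤ S := le_trans (by omega) hSge
  have hT0 : 0 < T := by positivity
  have hTR : (0 : ℝ) < T := by exact_mod_cast hT0
  have hSR : (0 : ℝ) < S := by exact_mod_cast hS1
  have hpj : ∀ j, (0 : ℝ) < (p j : ℝ) := fun j => by exact_mod_cast hp j
  have hξ1 : ∀ j, ξn j ≤ 1 := by
    intro j
    rw [← h1]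
    exact Finset.single_le_sum (fun i _ => h0 i) (mem_univ j)
  have hmj : ∀ j, (m j : ℝ) = (⌊((T : ℝ) * ξn j) / (p j : ℝ)⌋₊ : ℝ) + 1 := by
    intro j
    rw [hm]
    simp only [Mf, ← hS, ← hT]
    push_cast
    ring
  have key1 : ∀ j, (T : ℝ) * ξn j < (m j : ℝ) * p j ∧ (m j : ℝ) * p j ≤ (T : ℝ) * ξn j + p j := by
    intro j
    have hx0 : 0 ≤ (T : ℝ) * ξn j / p j := by
      have := h0 j
      positivity
    have hfl : ((⌊(T : ℝ) * ξn j / p j⌋₊ : ℝ)) ≤ (T : ℝ) * ξn j / p j := Nat.floor_le hx0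
    have hfu : (T : ℝ) * ξn j / p j < (⌊(T : ℝ) * ξn j / p j⌋₊ : ℝ) + 1 :=
      Nat.lt_floor_add_one _
    constructor
    · have h2 : (T : ℝ) * ξn j / p j < (m j : ℝ) := by rw [hmj j]; exact hfu
      calc (T : ℝ) * ξn j = ((T : ℝ) * ξn j / p j) * p j := by
            rw [div_mul_cancel₀ _ (hpj j).ne']
      _ < (m j : ℝ) * p j := mul_lt_mul_of_pos_right h2 (hpj j)
    · have h3 : (m j : ℝ) ≤ (T : ℝ) * ξn j / p j + 1 := by
        rw [hmj j]; exact add_le_add hfl le_rfl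
      calc (m j : ℝ) * p j ≤ ((T : ℝ) * ξn j / p j + 1) * p j :=
            mul_le_mul_of_nonneg_right h3 (hpj j).le
      _ = (T : ℝ) * ξn j + p j := by
            rw [add_mul, div_mul_cancel₀ _ (hpj j).ne', one_mul]
  set KR : ℝ := ((∑ i, m i * p i : ℕ) : ℝ) with hKR
  have hKeq : KR = ∑ i, (m i : ℝ) * (p i : ℝ) := by rw [hKR]; push_cast; rfl
  have hKlo : (T : ℝ) < KR := by
    rw [hKeq]
    calc (T : ℝ) = ∑ j, (T : ℝ) * ξn j := by rw [← Finset.mul_sum, h1, mul_one]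
    _ < ∑ j, (m j : ℝ) * p j :=
        Finset.sum_lt_sum_of_nonempty Finset.univ_nonempty fun j _ => (key1 j).1
  have hKhi : KR ≤ (T : ℝ) + S := by
    rw [hKeq]
    calc ∑ j, (m j : ℝ) * p j ≤ ∑ j, ((T : ℝ) * ξn j + p j) :=
          Finset.sum_le_sum fun j _ => (key1 j).2
    _ = (T : ℝ) + S := by
        rw [Finset.sum_add_distrib, ← Finset.mul_sum, h1, mul_one, hS]
        push_cast
        ring
  have hK0 : (0 : ℝ) < KR := hTR.trans hKlo
  have herr : ∀ j, |ξn j - (m j : ℝ) * p j / KR| ≤ (S : ℝ) / T := by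
    intro j
    have hpS : (p j : ℝ) ≤ S := by
      have : p j ≤ S := Finset.single_le_sum (fun i _ => Nat.zero_le _) (mem_univ j)
      exact_mod_cast this
    have hup : (m j : ℝ) * p j - ξn j * KR ≤ S := by
      have h4 : ξn j * (T : ℝ) ≤ ξn j * KR := mul_le_mul_of_nonneg_left hKlo.le (h0 j)
      have := (key1 j).2
      nlinarith
    have hlo2 : -(S : ℝ) ≤ (m j : ℝ) * p j - ξn j * KR := by
      have h5 : ξn j * KR ≤ ξn j * ((T : ℝ) + S) := mul_le_mul_of_nonneg_left hKhi (h0 j)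
      have h6 : ξn j * (S : ℝ) ≤ S := by
        nlinarith [hξ1 j, h0 j]
      have := (key1 j).1
      nlinarith
    have heq : (m j : ℝ) * p j / KR - ξn j = ((m j : ℝ) * p j - ξn j * KR) / KR := by
      field_simp
    rw [abs_sub_comm, heq, abs_div, abs_of_pos hK0]
    have habs : |(m j : ℝ) * p j - ξn j * KR| ≤ S := abs_le.mpr ⟨hlo2, hup⟩
    exact div_le_div₀ hSR.le habs hTR hKlo.le
  have hST : (S : ℝ) / T = 1 / ((n + 1 : ℝ) * 2 ^ n) := by
    rw [hT]
    push_cast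
    rw [div_eq_div_iff (by positivity) (by positivity)]
    ring
  have hsum : ∑ j : Fin (n + 1), (ξn j - (m j : ℝ) * p j / KR) ^ 2 ≤
      (n + 1 : ℝ) * ((S : ℝ) / T) ^ 2 := by
    calc ∑ j : Fin (n + 1), (ξn j - (m j : ℝ) * p j / KR) ^ 2
        ≤ ∑ _j : Fin (n + 1), ((S : ℝ) / T) ^ 2 := by
          apply Finset.sum_le_sum
          intro j _
          have := pow_le_pow_left₀ (abs_nonneg _) (herr j) 2
          rwa [sq_abs] at this
    _ = (n + 1 : ℝ) * ((S : ℝ) / T) ^ 2 := by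
          rw [Finset.sum_const, Finset.card_univ, Fintype.card_fin, nsmul_eq_mul]
          push_cast
          ring
  have hfinal : (n + 1 : ℝ) * ((S : ℝ) / T) ^ 2 ≤ ((1 / 2 : ℝ) ^ n) ^ 2 := by
    rw [hST]
    have hn1 : (0 : ℝ) < (n + 1 : ℝ) := by positivity
    have h2n : (0 : ℝ) < (2 : ℝ) ^ n := by positivity
    have heq2 : (n + 1 : ℝ) * (1 / ((n + 1 : ℝ) * 2 ^ n)) ^ 2 =
        1 / ((n + 1 : ℝ) * (2 ^ n) ^ 2) := by
      field_simp
    have heq3 : ((1 / 2 : ℝ) ^ n) ^ 2 = 1 / ((2 : ℝ) ^ n) ^ 2 := by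
      rw [one_div, inv_pow, inv_pow, one_div]
    rw [heq2, heq3]
    apply one_div_le_one_div_of_le (by positivity)
    nlinarith
  calc Real.sqrt (∑ j : Fin (n + 1), (ξn j - (m j : ℝ) * p j / KR) ^ 2)
      ≤ Real.sqrt (((1 / 2 : ℝ) ^ n) ^ 2) := Real.sqrt_le_sqrt (hsum.trans hfinal)
  _ = (1 / 2 : ℝ) ^ n := Real.sqrt_sq (by positivity)

/-- Given any sequence of points `ξ^{(n)}` in the standard simplices, one can choose positive
integers `k_n` (with `k_0 = 1`) and multiplicities `m^{(n)}_j ≥ 1` with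
`k_{n+1} = Σ_j m^{(n)}_j k_j`, such that the resulting points
`ζ^{(n)} = (m^{(n)}_j k_j / k_{n+1})_j` of the simplex satisfy `d(ξ^{(n)}, ζ^{(n)}) ≤ 2^{-n}`
in the Euclidean distance. -/
theorem stmt_8 (ξ : ∀ n : ℕ, Fin (n + 1) → ℝ)
    (hξ : ∀ n, ξ n ∈ stdSimplex ℝ (Fin (n + 1))) :
    ∃ (k : ℕ → ℕ) (m : ∀ n : ℕ, Fin (n + 1) → ℕ),
      k 0 = 1 ∧ (∀ n, 1 ≤ k n) ∧ (∀ n j, 1 ≤ m n j) ∧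
      (∀ n, k (n + 1) = ∑ j : Fin (n + 1), m n j * k (j : ℕ)) ∧
      (∀ n, (fun j : Fin (n + 1) => (m n j : ℝ) * (k (j : ℕ) : ℝ) / (k (n + 1) : ℝ))
        ∈ stdSimplex ℝ (Fin (n + 1))) ∧
      (∀ n, Real.sqrt (∑ j : Fin (n + 1),
          (ξ n j - (m n j : ℝ) * (k (j : ℕ) : ℝ) / (k (n + 1) : ℝ)) ^ 2) ≤ (1 / 2) ^ n) := by
  refine ⟨fun n => gf ξ n (Fin.last n), fun n => Mf n (ξ n) (gf ξ n), rfl,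
    fun n => gf_pos ξ n _, fun n j => Nat.le_add_left 1 _, ?_, ?_, ?_⟩
  · -- recursion identity
    intro n
    have hK : gf ξ (n + 1) (Fin.last (n + 1)) = ∑ j, Mf n (ξ n) (gf ξ n) j * gf ξ n j := by
      simp [gf]
    exact hK.trans (Finset.sum_congr rfl fun j _ => by rw [gf_coh ξ n j])
  · -- simplex membership
    intro n
    have hK : gf ξ (n + 1) (Fin.last (n + 1)) = ∑ j, Mf n (ξ n) (gf ξ n) j * gf ξ n j := by
      simp [gf]
    have hK1 : 1 ≤ gf ξ (n + 1) (Fin.last (n + 1)) := gf_pos ξ (n + 1) _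
    have hKne : ((gf ξ (n + 1) (Fin.last (n + 1)) : ℝ)) ≠ 0 := by
      have : (0 : ℝ) < (gf ξ (n + 1) (Fin.last (n + 1)) : ℝ) := by exact_mod_cast hK1
      exact this.ne'
    refine ⟨fun j => div_nonneg (by positivity) (Nat.cast_nonneg _), ?_⟩
    rw [← Finset.sum_div]
    have hnum : ∑ j : Fin (n + 1), (Mf n (ξ n) (gf ξ n) j : ℝ) * (gf ξ (j : ℕ) (Fin.last (j : ℕ)) : ℝ)
        = (gf ξ (n + 1) (Fin.last (n + 1)) : ℝ) := by
      rw [hK]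
      push_cast
      exact Finset.sum_congr rfl fun j _ => by rw [gf_coh ξ n j]
    rw [hnum, div_self hKne]
  · -- distance bound
    intro n
    have h := key n (ξ n) (hξ n).1 (hξ n).2 (gf ξ n) (gf_pos ξ n)
    have hco : ∀ j : Fin (n + 1), gf ξ (j : ℕ) (Fin.last (j : ℕ)) = gf ξ n j :=
      fun j => (gf_coh ξ n j).symm
    have hK : gf ξ (n + 1) (Fin.last (n + 1)) = ∑ i, Mf n (ξ n) (gf ξ n) i * gf ξ n i := by
      simp [gf]
    simp only [hco, hK]
    exact h
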